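/- Let n ≥ 3 with n ≠ 5, let C = x_0, x_1, …, x_{n−1}, x_0 be a cycle of length n, and let a, b, c be three pairwise distinct colors. If the three edges x_0x_1, x_1x_2, x_2x_3 are pre-colored a, b, c respectively, then this partial edge coloring can be extended to a 3-star edge coloring of C using only the colors {a, b, c}. -/
import Mathlib


def psiSEC (n m : ℕ) : ℕ :=
  if n % 3 = 1 ∧ m = n - 1 then 1
  else if n % 3 = 2 ∧ m = n - 3 then 0
  else if n % 3 = 2 ∧ m = n - 2 then 2
  else m % 3

lemma psiSEC_lt (n m : ℕ) : psiSEC n m < 3 := by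
  unfold psiSEC; split_ifs <;> first | omega | simp

lemma psiSEC0 {n : ℕ} (h : n % 3 = 0) (m : ℕ) : psiSEC n m = m % 3 := by
  unfold psiSEC; split_ifs <;> first | omega | simp

lemma psiSEC1 {n : ℕ} (h : n % 3 = 1) (m : ℕ) :
    psiSEC n m = if m = n - 1 then 1 else m % 3 := by
  unfold psiSEC; split_ifs <;> first | omega | simp

lemma psiSEC2 {n : ℕ} (h : n % 3 = 2) (m : ℕ) :
    psiSEC n m = if m = n - 3 then 0 else if m = n - 2 then 2 else m % 3 := by
  unfold psiSEC; split_ifs <;> first | omega | simp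

lemma psiSEC_P1 (n : ℕ) (hn : 3 ≤ n) (hn5 : n ≠ 5) (m : ℕ) (hm : m < n) :
    psiSEC n ((m + 1) % n) ≠ psiSEC n m := by
  have hA : (m + 1 < n ∧ (m + 1) % n = m + 1) ∨ (m = n - 1 ∧ (m + 1) % n = 0) := by
    rcases Nat.lt_or_ge (m + 1) n with h | h
    · exact Or.inl ⟨h, Nat.mod_eq_of_lt h⟩
    · have : m + 1 = n := by omega
      exact Or.inr ⟨by omega, by simp [this]⟩
  have h3 : n % 3 = 0 ∨ n % 3 = 1 ∨ n % 3 = 2 := by omega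
  rcases hA with ⟨hlt, hA⟩ | ⟨hm1, hA⟩ <;> rw [hA] <;>
    rcases h3 with h3 | h3 | h3
  · simp only [psiSEC0 h3]; omega
  · simp only [psiSEC1 h3]; split_ifs <;> first | omega | simp
  · simp only [psiSEC2 h3]; split_ifs <;> first | omega | simp
  · simp only [psiSEC0 h3]; omega
  · simp only [psiSEC1 h3]; split_ifs <;> first | omega | simp
  · simp only [psiSEC2 h3]; split_ifs <;> first | omega | simp

lemma psiSEC_P2 (n : ℕ) (hn : 3 ≤ n) (hn5 : n ≠ 5) (m : ℕ) (hm : m < n) :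
    ¬ (psiSEC n m = psiSEC n ((m + 2) % n) ∧
       psiSEC n ((m + 1) % n) = psiSEC n ((m + 3) % n)) := by
  have key : ∀ k, m + k < n → (m + k) % n = m + k := fun k h => Nat.mod_eq_of_lt h
  have hns : n % n = 0 := Nat.mod_self n
  have hcase : m + 3 < n ∨ m = n - 3 ∨ m = n - 2 ∨ m = n - 1 := by omega
  have h3 : n % 3 = 0 ∨ n % 3 = 1 ∨ n % 3 = 2 := by omega
  rcases hcase with hc | hc | hc | hc
  · rw [key 1 (by omega), key 2 (by omega), key 3 (by omega)]
    rcases h3 with h3 | h3 | h3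
    · simp only [psiSEC0 h3]; omega
    · simp only [psiSEC1 h3]; split_ifs <;> first | omega | simp
    · simp only [psiSEC2 h3]; split_ifs <;> first | omega | simp
  · have e1 : (m + 1) % n = m + 1 := key 1 (by omega)
    have e2 : (m + 2) % n = m + 2 := key 2 (by omega)
    have e3 : (m + 3) % n = 0 := by rw [show m + 3 = n by omega, hns]
    rw [e1, e2, e3]
    rcases h3 with h3 | h3 | h3
    · simp only [psiSEC0 h3]; omega
    · simp only [psiSEC1 h3]; split_ifs <;> first | omega | simp
    · simp only [psiSEC2 h3]; split_ifs <;> first | omega | simp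
  · have e1 : (m + 1) % n = m + 1 := key 1 (by omega)
    have e2 : (m + 2) % n = 0 := by rw [show m + 2 = n by omega, hns]
    have e3 : (m + 3) % n = 1 := by
      rw [show m + 3 = n + 1 by omega, Nat.add_mod_left, Nat.mod_eq_of_lt (by omega)]
    rw [e1, e2, e3]
    rcases h3 with h3 | h3 | h3
    · simp only [psiSEC0 h3]; omega
    · simp only [psiSEC1 h3]; split_ifs <;> first | omega | simp
    · simp only [psiSEC2 h3]; split_ifs <;> first | omega | simp
  · have e1 : (m + 1) % n = 0 := by rw [show m + 1 = n by omega, hns]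
    have e2 : (m + 2) % n = 1 := by
      rw [show m + 2 = n + 1 by omega, Nat.add_mod_left, Nat.mod_eq_of_lt (by omega)]
    have e3 : (m + 3) % n = 2 := by
      rw [show m + 3 = n + 2 by omega, Nat.add_mod_left, Nat.mod_eq_of_lt (by omega)]
    rw [e1, e2, e3]
    rcases h3 with h3 | h3 | h3
    · simp only [psiSEC0 h3]; omega
    · simp only [psiSEC1 h3]; split_ifs <;> first | omega | simp
    · simp only [psiSEC2 h3]; split_ifs <;> first | omega | simp

def hSEC {α : Type*} (a b c : α) : ℕ → α :=
  fun k => if k = 0 then a else if k = 1 then b else c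

lemma hSEC_mem {α : Type*} (a b c : α) (k : ℕ) : hSEC a b c k ∈ ({a, b, c} : Set α) := by
  unfold hSEC; split_ifs <;> simp

lemma hSEC_inj {α : Type*} {a b c : α} (hab : a ≠ b) (hac : a ≠ c) (hbc : b ≠ c)
    (j k : ℕ) (hj : j < 3) (hk : k < 3) (heq : hSEC a b c j = hSEC a b c k) : j = k := by
  interval_cases j <;> interval_cases k <;> simp_all [hSEC]


/-- A 3-star edge coloring of the cycle `x_0, x_1, …, x_{n-1}, x_0`, where the edge
`x_i x_{i+1}` (indices mod `n`) receives color `g i`: the coloring is proper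
(adjacent edges get distinct colors) and no path or cycle with four edges is bicolored
(for a proper coloring this means no four consecutive edges are colored `a b a b`). -/
def IsStarEdgeColoringCycle {α : Type*} (n : ℕ) (g : ZMod n → α) : Prop :=
  (∀ i, g i ≠ g (i + 1)) ∧ ∀ i, ¬ (g i = g (i + 2) ∧ g (i + 1) = g (i + 3))

theorem stmt_0 {α : Type*} (n : ℕ) (hn : 3 ≤ n) (hn5 : n ≠ 5)
    (a b c : α) (hab : a ≠ b) (hac : a ≠ c) (hbc : b ≠ c) :
    ∃ g : ZMod n → α, (∀ i, g i ∈ ({a, b, c} : Set α)) ∧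
      IsStarEdgeColoringCycle n g ∧ g 0 = a ∧ g 1 = b ∧ g 2 = c := by
  haveI : NeZero n := ⟨by omega⟩
  have hinj : ∀ j k, j < 3 → k < 3 → hSEC a b c j = hSEC a b c k → j = k :=
    fun j k hj hk heq => hSEC_inj hab hac hbc j k hj hk heq
  have hval : ∀ (i : ZMod n) (k : ℕ), (i + (k : ZMod n)).val = (i.val + k) % n := by
    intro i k
    rw [ZMod.val_add, ZMod.val_natCast]
    conv_rhs => rw [Nat.add_mod, Nat.mod_eq_of_lt (ZMod.val_lt i)]
  have e1 : ∀ i : ZMod n, (i + 1).val = (i.val + 1) % n := by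
    intro i
    have h1 : ((1 : ℕ) : ZMod n) = 1 := Nat.cast_one
    rw [← h1, hval i 1]
  have e2 : ∀ i : ZMod n, (i + 2).val = (i.val + 2) % n := by
    intro i
    have h2 : ((2 : ℕ) : ZMod n) = 2 := Nat.cast_ofNat
    rw [← h2, hval i 2]
  have e3 : ∀ i : ZMod n, (i + 3).val = (i.val + 3) % n := by
    intro i
    have h3 : ((3 : ℕ) : ZMod n) = 3 := Nat.cast_ofNat
    rw [← h3, hval i 3]
  refine ⟨fun i => hSEC a b c (psiSEC n i.val), fun i => ?_, ⟨fun i => ?_, fun i => ?_⟩, ?_, ?_, ?_⟩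
  · exact hSEC_mem a b c _
  · simp only [e1]
    intro heq
    exact psiSEC_P1 n hn hn5 i.val (ZMod.val_lt i)
      (hinj _ _ (psiSEC_lt _ _) (psiSEC_lt _ _) heq).symm
  · rintro ⟨q1, q2⟩
    simp only [e1, e2, e3] at q1 q2
    exact psiSEC_P2 n hn hn5 i.val (ZMod.val_lt i)
      ⟨hinj _ _ (psiSEC_lt _ _) (psiSEC_lt _ _) q1,
       hinj _ _ (psiSEC_lt _ _) (psiSEC_lt _ _) q2⟩
  · show hSEC a b c (psiSEC n (0 : ZMod n).val) = a
    rw [ZMod.val_zero, show psiSEC n 0 = 0 by unfold psiSEC; split_ifs <;> omega]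
    simp [hSEC]
  · show hSEC a b c (psiSEC n (1 : ZMod n).val) = b
    haveI : Fact (1 < n) := ⟨by omega⟩
    rw [ZMod.val_one, show psiSEC n 1 = 1 by unfold psiSEC; split_ifs <;> omega]
    simp [hSEC]
  · show hSEC a b c (psiSEC n (2 : ZMod n).val) = c
    have hv2 : (2 : ZMod n).val = 2 := by
      rw [show (2 : ZMod n) = ((2 : ℕ) : ZMod n) from (Nat.cast_ofNat).symm,
        ZMod.val_natCast, Nat.mod_eq_of_lt (by omega)]
    rw [hv2, show psiSEC n 2 = 2 by unfold psiSEC; split_ifs <;> omega]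
    simp [hSEC]
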